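/- Let A be a self-adjoint operator, λ ∈ ℝ, and suppose there exist vectors φ, g in H with ‖φ‖ = 1, ‖g‖ ≤ ε < 1, φ - g ∈ dom(A), and ‖(A - λ)(φ - g)‖ ≤ η + (1 + |λ|)ε. Then there is a spectral point μ of A with |λ - μ| ≤ (η + (1 + |λ|)ε)/(1 - ε). -/

import Mathlib

open scoped Pointwise


theorem mps_eigenvalue_inclusion
    {H : Type*} [NormedAddCommGroup H] [InnerProductSpace ℂ H] [CompleteSpace H]
    (A : H →L[ℂ] H) (hA : IsSelfAdjoint A) (lam ε η : ℝ)
    (hε0 : 0 ≤ ε) (hε1 : ε < 1) (hη : 0 ≤ η)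
    (φ g : H) (hφ : ‖φ‖ = 1) (hg : ‖g‖ ≤ ε)
    (h : ‖A (φ - g) - (lam : ℂ) • (φ - g)‖ ≤ η + (1 + |lam|) * ε) :
    ∃ μ ∈ spectrum ℂ A,
      ‖(lam : ℂ) - μ‖ ≤ (η + (1 + |lam|) * ε) / (1 - ε) := by
  have hHnt : Nontrivial H := by
    refine nontrivial_of_ne φ 0 ?_
    intro h0; rw [h0, norm_zero] at hφ; norm_num at hφ
  set δ : ℝ := η + (1 + |lam|) * ε with hδdef
  have hδ0 : 0 ≤ δ := by positivity
  have h1ε : 0 < 1 - ε := by linarith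
  by_cases hmem : (lam : ℂ) ∈ spectrum ℂ A
  · exact ⟨lam, hmem, by rw [sub_self, norm_zero]; exact div_nonneg hδ0 h1ε.le⟩
  -- T = lam - A is an invertible self-adjoint operator
  set T : H →L[ℂ] H := algebraMap ℂ (H →L[ℂ] H) (lam : ℂ) - A with hTdef
  have hunit : IsUnit T := spectrum.notMem_iff.mp hmem
  have hTsa : IsSelfAdjoint T := by
    refine IsSelfAdjoint.sub ?_ hA
    have : IsSelfAdjoint (lam : ℂ) := Complex.conj_ofReal lam
    exact this.algebraMap _
  set a : H →L[ℂ] H := ↑hunit.unit⁻¹ with hadef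
  have haT : a * T = 1 := hunit.val_inv_mul
  have hTa : T * a = 1 := hunit.mul_val_inv
  have hasa : IsSelfAdjoint a := by
    have h1 : star a * T = 1 := by
      calc star a * T = star (star T * a) := by rw [star_mul, star_star]
        _ = star (T * a) := by rw [hTsa]
        _ = 1 := by rw [hTa, star_one]
    calc star a = star a * (T * a) := by rw [hTa, mul_one]
      _ = (star a * T) * a := by rw [mul_assoc]
      _ = a := by rw [h1, one_mul]
  -- norm of a is attained at a spectral point
  obtain ⟨z, hz, hznorm⟩ := spectrum.exists_nnnorm_eq_spectralRadius a
  rw [hasa.spectralRadius_eq_nnnorm] at hznorm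
  have hzn : ‖z‖ = ‖a‖ := by
    have h2 : ‖z‖₊ = ‖a‖₊ := by exact_mod_cast hznorm
    exact congrArg NNReal.toReal h2
  -- identify spectrum of a
  have hspec : spectrum ℂ a = (spectrum ℂ T)⁻¹ := by
    rw [hadef, ← spectrum.map_inv hunit.unit, hunit.unit_spec]
  rw [hspec, Set.mem_inv] at hz
  have hspecT : spectrum ℂ T = ({(lam : ℂ)} : Set ℂ) - spectrum ℂ A := by
    rw [hTdef]; exact (spectrum.singleton_sub_eq A (lam : ℂ)).symm
  rw [hspecT, Set.mem_sub] at hz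
  obtain ⟨l, hl, μ, hμ, hlz⟩ := hz
  rw [Set.mem_singleton_iff] at hl
  subst hl
  refine ⟨μ, hμ, ?_⟩
  -- z ≠ 0
  have ha0 : a ≠ 0 := by
    intro h0
    rw [h0, zero_mul] at haT
    exact zero_ne_one haT
  have hz0 : z ≠ 0 := by
    intro h0
    rw [h0, norm_zero] at hzn
    exact ha0 (by rw [← norm_eq_zero, ← hzn])
  have habs : ‖(lam : ℂ) - μ‖ = ‖z‖⁻¹ := by
    rw [hlz, norm_inv]
  -- main estimate
  set u : H := φ - g with hudef
  have hTu : ‖T u‖ ≤ δ := by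
    have : T u = -(A u - (lam : ℂ) • u) := by
      simp [hTdef, Algebra.algebraMap_eq_smul_one]
    rw [this, norm_neg]
    exact h
  have hu : a (T u) = u := by
    have : (a * T) u = u := by rw [haT]; rfl
    exact this
  have hule : 1 - ε ≤ ‖u‖ := by
    have := norm_sub_norm_le φ g
    rw [hφ] at this
    linarith
  have key : 1 - ε ≤ ‖a‖ * δ := by
    calc 1 - ε ≤ ‖u‖ := hule
      _ = ‖a (T u)‖ := by rw [hu]
      _ ≤ ‖a‖ * ‖T u‖ := a.le_opNorm _
      _ ≤ ‖a‖ * δ := by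
          exact mul_le_mul_of_nonneg_left hTu (norm_nonneg a)
  have hna : 0 < ‖a‖ := by rw [← hzn]; exact norm_pos_iff.mpr hz0
  rw [habs, hzn, le_div_iff₀ h1ε, inv_mul_le_iff₀ hna]
  exact key
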